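/- Generalized Gronwall inequality with singular kernel: let φ : [0,T] → [0,∞) be bounded measurable, and suppose there exist constants a ≥ 0, b ≥ 0, r > 1 and β ∈ [0, 1/r) such that φ(t) ≤ a + b (∫_0^t (t−s)^{−βr} φ(s)^r ds)^{1/r} for all t ∈ [0,T], where βr < 1. Then there is a constant C = C(b, r, β, T) such that φ(t) ≤ C·a for all t ∈ [0,T]. -/

import Mathlib

set_option maxHeartbeats 1000000

open MeasureTheory Set Filter

private lemma rpow_subadd {x y p : ℝ} (hx : 0 ≤ x) (hy : 0 ≤ y)
    (hp0 : 0 ≤ p) (hp1 : p ≤ 1) : (x + y) ^ p ≤ x ^ p + y ^ p := by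
  have h := NNReal.rpow_add_le_add_rpow x.toNNReal y.toNNReal hp0 hp1
  have hxy : ((x.toNNReal + y.toNNReal : NNReal) : ℝ) = x + y := by
    push_cast [Real.coe_toNNReal _ hx, Real.coe_toNNReal _ hy]; ring
  calc (x + y) ^ p = (((x.toNNReal + y.toNNReal : NNReal) : ℝ)) ^ p := by rw [hxy]
    _ = (((x.toNNReal + y.toNNReal) ^ p : NNReal) : ℝ) := by
        rw [← NNReal.coe_rpow]
    _ ≤ ((x.toNNReal ^ p + y.toNNReal ^ p : NNReal) : ℝ) := by exact_mod_cast h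
    _ = x ^ p + y ^ p := by
        rw [NNReal.coe_add, NNReal.coe_rpow, NNReal.coe_rpow,
          Real.coe_toNNReal _ hx, Real.coe_toNNReal _ hy]

/-- Generalized Gronwall inequality with singular kernel: if a bounded measurable
nonnegative `φ` satisfies `φ(t) ≤ a + b (∫_0^t (t-s)^{-βr} φ(s)^r ds)^{1/r}` on `[0,T]`
with `r > 1`, `0 ≤ β` and `βr < 1`, then `φ(t) ≤ C a` for a constant `C = C(b,r,β,T)`. -/
theorem stmt5 (T b r β : ℝ) (hT : 0 < T) (hb : 0 ≤ b) (hr : 1 < r)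
    (hβ0 : 0 ≤ β) (hβr : β * r < 1) :
    ∃ C > (0:ℝ), ∀ (φ : ℝ → ℝ) (a : ℝ), 0 ≤ a → Measurable φ → (∀ t, 0 ≤ φ t) →
      (∃ Mb : ℝ, ∀ t ∈ Set.Icc (0:ℝ) T, φ t ≤ Mb) →
      (∀ t ∈ Set.Icc (0:ℝ) T,
        φ t ≤ a + b * (∫ s in Set.Ioo (0:ℝ) t, (t - s) ^ (-(β * r)) * φ s ^ r) ^ (1 / r)) →
      ∀ t ∈ Set.Icc (0:ℝ) T, φ t ≤ C * a := by
  have hr0 : (0:ℝ) < r := lt_trans one_pos hr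
  have hrne : r ≠ 0 := hr0.ne'
  have h1r0 : 0 < 1 / r := by positivity
  have h1r1 : 1 / r ≤ 1 := by rw [div_le_one hr0]; exact hr.le
  have hβr0 : 0 ≤ β * r := mul_nonneg hβ0 hr0.le
  have hq : (0:ℝ) < 1 - β * r := by linarith
  have hp1 : (-1:ℝ) < -(β * r) := by linarith
  have hpneg : -(β * r) ≤ 0 := by linarith
  -- choice of step size δ
  have hbpos : (0:ℝ) < 2 * (b + 1) := by linarith
  set X : ℝ := (1 - β * r) * (2 * (b + 1)) ^ (-r) with hXdef
  have hX0 : 0 < X := mul_pos hq (Real.rpow_pos_of_pos hbpos _)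
  set δ : ℝ := min T (X ^ (1 - β * r)⁻¹) with hδdef
  have hδpos : 0 < δ := lt_min hT (Real.rpow_pos_of_pos hX0 _)
  have hδT : δ ≤ T := min_le_left _ _
  -- contraction estimate
  have hlam0 : 0 ≤ δ ^ (1 - β * r) / (1 - β * r) :=
    div_nonneg (Real.rpow_nonneg hδpos.le _) hq.le
  have hlamle : δ ^ (1 - β * r) / (1 - β * r) ≤ (2 * (b + 1)) ^ (-r) := by
    have h1 : δ ^ (1 - β * r) ≤ (X ^ (1 - β * r)⁻¹) ^ (1 - β * r) :=
      Real.rpow_le_rpow hδpos.le (min_le_right _ _) hq.le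
    have h2 : (X ^ (1 - β * r)⁻¹) ^ (1 - β * r) = X := by
      rw [← Real.rpow_mul hX0.le, inv_mul_cancel₀ hq.ne', Real.rpow_one]
    rw [div_le_iff₀ hq]
    calc δ ^ (1 - β * r) ≤ X := h1.trans_eq h2
      _ = (2 * (b + 1)) ^ (-r) * (1 - β * r) := by rw [hXdef]; ring
  have hcontr : b * (δ ^ (1 - β * r) / (1 - β * r)) ^ (1 / r) ≤ 1 / 2 := by
    have h1 : (δ ^ (1 - β * r) / (1 - β * r)) ^ (1 / r) ≤ ((2 * (b + 1)) ^ (-r)) ^ (1 / r) :=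
      Real.rpow_le_rpow hlam0 hlamle h1r0.le
    have h2 : ((2 * (b + 1)) ^ (-r : ℝ)) ^ (1 / r) = (2 * (b + 1))⁻¹ := by
      rw [← Real.rpow_mul hbpos.le]
      rw [show -r * (1 / r) = -1 by field_simp]
      rw [Real.rpow_neg_one]
    calc b * (δ ^ (1 - β * r) / (1 - β * r)) ^ (1 / r)
        ≤ b * (2 * (b + 1))⁻¹ := by
          rw [← h2]; exact mul_le_mul_of_nonneg_left h1 hb
      _ ≤ 1 / 2 := by
          rw [inv_eq_one_div, mul_one_div, div_le_div_iff₀ hbpos two_pos]; linarith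
  -- key constants
  set K : ℝ := b * (δ ^ (-(β * r)) * T) ^ (1 / r) with hKdef
  have hK0 : 0 ≤ K :=
    mul_nonneg hb (Real.rpow_nonneg (mul_nonneg (Real.rpow_nonneg hδpos.le _) hT.le) _)
  set Cs : ℕ → ℝ := fun n => Nat.rec (1:ℝ) (fun _ C => 2 + 2 * K * C) n with hCsdef
  have hCs0 : Cs 0 = 1 := rfl
  have hCsS : ∀ n, Cs (n + 1) = 2 + 2 * K * Cs n := fun n => rfl
  have hCspos : ∀ n, 0 < Cs n := by
    intro n; induction n with
    | zero => norm_num [hCs0]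
    | succ n ih => rw [hCsS]; nlinarith
  obtain ⟨N, hN⟩ : ∃ N : ℕ, T ≤ N * δ := by
    obtain ⟨N, hN⟩ := exists_nat_ge (T / δ)
    exact ⟨N, by rwa [div_le_iff₀ hδpos] at hN⟩
  refine ⟨Cs N, hCspos N, ?_⟩
  intro φ a ha hmeas hφ0 hbdd hineq
  obtain ⟨Mb, hMb⟩ := hbdd
  set M : ℝ := max Mb 0 with hMdef
  have hM0 : 0 ≤ M := le_max_right _ _
  have hφM : ∀ t ∈ Icc (0:ℝ) T, φ t ≤ M := fun t ht => (hMb t ht).trans (le_max_left _ _)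
  -- integrability of the kernel
  have hker : ∀ t c : ℝ, c ≤ t →
      IntegrableOn (fun s => (t - s) ^ (-(β * r))) (Ioo c t) volume := by
    intro t c hct
    have h0 : IntervalIntegrable (fun x : ℝ => x ^ (-(β * r))) volume 0 (t - c) :=
      intervalIntegral.intervalIntegrable_rpow' hp1
    have h1 := h0.comp_sub_left t
    rw [intervalIntegrable_iff] at h1
    simp only [sub_zero, sub_sub_cancel] at h1
    refine h1.mono_set ?_
    rw [Set.uIoc_of_ge hct]
    exact Ioo_subset_Ioc_self
  -- integrability of the full integrand
  have hint : ∀ t ∈ Icc (0:ℝ) T,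
      IntegrableOn (fun s => (t - s) ^ (-(β * r)) * φ s ^ r) (Ioo 0 t) volume := by
    intro t ht
    have hmg : Measurable fun s => φ s ^ r := hmeas.pow_const r
    refine Integrable.bdd_mul (c := M ^ r) ((hker t 0 ht.1))
      hmg.aestronglyMeasurable.restrict ?_ |>.congr ?_
    · refine (ae_restrict_iff' measurableSet_Ioo).2 (ae_of_all _ fun s hs => ?_)
      rw [Real.norm_eq_abs, abs_of_nonneg (Real.rpow_nonneg (hφ0 s) r)]
      exact Real.rpow_le_rpow (hφ0 s) (hφM s ⟨hs.1.le, hs.2.le.trans ht.2⟩) hr0.le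
    · exact ae_of_all _ fun s => mul_comm _ _
  -- value of the kernel integral
  have hJ : ∀ t c : ℝ, c ≤ t →
      (∫ s in Ioo c t, (t - s) ^ (-(β * r))) = (t - c) ^ (1 - β * r) / (1 - β * r) := by
    intro t c hct
    rw [← integral_Ioc_eq_integral_Ioo, ← intervalIntegral.integral_of_le hct]
    have h1 : (∫ s in c..t, (t - s) ^ (-(β * r)))
        = ∫ u in (t - t)..(t - c), u ^ (-(β * r)) :=
      intervalIntegral.integral_comp_sub_left (fun u => u ^ (-(β * r))) t
    rw [h1, sub_self, integral_rpow (Or.inl hp1)]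
    rw [Real.zero_rpow (by linarith : -(β * r) + 1 ≠ 0)]
    rw [show -(β * r) + 1 = 1 - β * r by ring]
    ring
  -- main induction on the window index
  have main : ∀ j : ℕ, ∀ t ∈ Icc (0:ℝ) (min (j * δ) T), φ t ≤ Cs j * a := by
    intro j
    induction j with
    | zero =>
      intro t ht
      have ht0 : t = 0 := le_antisymm (ht.2.trans (by simp)) ht.1
      subst ht0
      have h0 := hineq 0 ⟨le_refl _, hT.le⟩
      simp only [Set.Ioo_self, Measure.restrict_empty, integral_zero_measure] at h0
      rw [Real.zero_rpow h1r0.ne'] at h0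
      simpa [hCs0] using h0.trans (by linarith)
    | succ j ih =>
      set A : ℝ := a + K * (Cs j * a) with hAdef
      have hA0 : 0 ≤ A := by
        have := (hCspos j).le
        have : 0 ≤ K * (Cs j * a) := mul_nonneg hK0 (mul_nonneg (hCspos j).le ha)
        linarith
      have hCA : Cs (j + 1) * a = 2 * A := by rw [hCsS, hAdef]; ring
      have key : ∀ n : ℕ, ∀ t ∈ Icc (0:ℝ) (min ((j + 1 : ℕ) * δ) T),
          φ t ≤ 2 * A + (1 / 2) ^ n * M := by
        intro n
        induction n with
        | zero =>
          intro t ht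
          have h := hφM t ⟨ht.1, ht.2.trans (min_le_right _ _)⟩
          rw [pow_zero, one_mul]
          linarith
        | succ n ihn =>
          intro t ht
          have htT : t ≤ T := ht.2.trans (min_le_right _ _)
          rcases eq_or_lt_of_le ht.1 with h0t | h0t
          · -- t = 0
            have h0 := hineq 0 ⟨le_refl _, hT.le⟩
            simp only [Set.Ioo_self, Measure.restrict_empty, integral_zero_measure] at h0
            rw [Real.zero_rpow h1r0.ne'] at h0
            rw [← h0t]
            have hhalf : (0:ℝ) ≤ (1/2 : ℝ) ^ (n+1) * M := by positivity
            have hKa : 0 ≤ K * (Cs j * a) := mul_nonneg hK0 (mul_nonneg (hCspos j).le ha)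
            have hA' : a ≤ A := by rw [hAdef]; linarith
            linarith
          · -- 0 < t
            set c : ℝ := max 0 (t - δ) with hcdef
            have hc0 : 0 ≤ c := le_max_left _ _
            have hct : c < t := max_lt h0t (by linarith)
            have htj1 : t ≤ (j + 1 : ℕ) * δ := ht.2.trans (min_le_left _ _)
            have htj1' : t ≤ (j : ℝ) * δ + δ := by push_cast at htj1; linarith
            have htcδ : t - c ≤ δ := by
              have : t - δ ≤ c := le_max_right _ _
              linarith
            set B : ℝ := 2 * A + (1 / 2) ^ n * M with hBdef
            have hB0 : 0 ≤ B := by positivity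
            -- split the integral
            have hsplit : Ioo (0:ℝ) t = Ioc 0 c ∪ Ioo c t := by
              ext x
              simp only [mem_Ioo, mem_Ioc, mem_union]
              constructor
              · rintro ⟨h1, h2⟩
                rcases le_or_gt x c with h | h
                · exact Or.inl ⟨h1, h⟩
                · exact Or.inr ⟨h, h2⟩
              · rintro (⟨h1, h2⟩ | ⟨h1, h2⟩)
                · exact ⟨h1, lt_of_le_of_lt h2 hct⟩
                · exact ⟨lt_of_le_of_lt hc0 h1, h2⟩
            have hintt := hint t ⟨h0t.le, htT⟩
            have hint1 : IntegrableOn (fun s => (t - s) ^ (-(β * r)) * φ s ^ r) (Ioc 0 c) volume :=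
              hintt.mono_set (by rw [hsplit]; exact subset_union_left)
            have hint2 : IntegrableOn (fun s => (t - s) ^ (-(β * r)) * φ s ^ r) (Ioo c t) volume :=
              hintt.mono_set (by rw [hsplit]; exact subset_union_right)
            -- bound on the head piece
            have hI1 : (∫ s in Ioc 0 c, (t - s) ^ (-(β * r)) * φ s ^ r)
                ≤ δ ^ (-(β * r)) * (Cs j * a) ^ r * T := by
              have hmono : ∀ s ∈ Ioc (0:ℝ) c,
                  (t - s) ^ (-(β * r)) * φ s ^ r ≤ δ ^ (-(β * r)) * (Cs j * a) ^ r := by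
                intro s hs
                have hcpos : 0 < c := lt_of_lt_of_le hs.1 hs.2
                have hceq : c = t - δ := by
                  rcases max_choice 0 (t - δ) with h | h
                  · rw [← hcdef] at h; exact absurd h (by intro hh; rw [hh] at hcpos; exact lt_irrefl _ hcpos)
                  · rw [← hcdef] at h; exact h
                have hts : δ ≤ t - s := by
                  have : s ≤ c := hs.2
                  rw [hceq] at this; linarith
                have h1 : (t - s) ^ (-(β * r)) ≤ δ ^ (-(β * r)) :=
                  Real.rpow_le_rpow_of_nonpos hδpos hts hpneg
                have hsj : s ∈ Icc (0:ℝ) (min ((j:ℕ) * δ) T) := by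
                  refine ⟨hs.1.le, le_min ?_ ?_⟩
                  · have : s ≤ c := hs.2
                    rw [hceq] at this
                    push_cast
                    linarith
                  · linarith [hs.2, hct.le, htT]
                have h2 : φ s ^ r ≤ (Cs j * a) ^ r :=
                  Real.rpow_le_rpow (hφ0 s) (ih s hsj) hr0.le
                exact mul_le_mul h1 h2 (Real.rpow_nonneg (hφ0 s) r)
                  (Real.rpow_nonneg hδpos.le _)
              calc (∫ s in Ioc 0 c, (t - s) ^ (-(β * r)) * φ s ^ r)
                  ≤ ∫ _s in Ioc (0:ℝ) c, δ ^ (-(β * r)) * (Cs j * a) ^ r :=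
                    setIntegral_mono_on hint1 (integrableOn_const measure_Ioc_lt_top.ne)
                      measurableSet_Ioc hmono
                _ = c * (δ ^ (-(β * r)) * (Cs j * a) ^ r) := by
                    rw [setIntegral_const, Real.volume_real_Ioc_of_le hc0, smul_eq_mul, sub_zero]
                _ ≤ δ ^ (-(β * r)) * (Cs j * a) ^ r * T := by
                    have hcT : c ≤ T := le_trans hct.le htT
                    have : 0 ≤ δ ^ (-(β * r)) * (Cs j * a) ^ r :=
                      mul_nonneg (Real.rpow_nonneg hδpos.le _)
                        (Real.rpow_nonneg (mul_nonneg (hCspos j).le ha) _)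
                    nlinarith
            -- bound on the tail piece
            have hI2 : (∫ s in Ioo c t, (t - s) ^ (-(β * r)) * φ s ^ r)
                ≤ δ ^ (1 - β * r) / (1 - β * r) * B ^ r := by
              have hmono : ∀ s ∈ Ioo c t,
                  (t - s) ^ (-(β * r)) * φ s ^ r ≤ (t - s) ^ (-(β * r)) * B ^ r := by
                intro s hs
                have hsW : s ∈ Icc (0:ℝ) (min ((j + 1 : ℕ) * δ) T) :=
                  ⟨le_trans hc0 hs.1.le, le_trans hs.2.le ht.2⟩
                have h2 : φ s ^ r ≤ B ^ r :=
                  Real.rpow_le_rpow (hφ0 s) (ihn s hsW) hr0.le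
                exact mul_le_mul_of_nonneg_left h2 (Real.rpow_nonneg (by linarith [hs.2] : 0 ≤ t - s) _)
              calc (∫ s in Ioo c t, (t - s) ^ (-(β * r)) * φ s ^ r)
                  ≤ ∫ s in Ioo c t, (t - s) ^ (-(β * r)) * B ^ r :=
                    setIntegral_mono_on hint2 ((hker t c hct.le).mul_const _)
                      measurableSet_Ioo hmono
                _ = (t - c) ^ (1 - β * r) / (1 - β * r) * B ^ r := by
                    rw [integral_mul_const, hJ t c hct.le]
                _ ≤ δ ^ (1 - β * r) / (1 - β * r) * B ^ r := by
                    have h1 : (t - c) ^ (1 - β * r) ≤ δ ^ (1 - β * r) :=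
                      Real.rpow_le_rpow (by linarith : (0:ℝ) ≤ t - c) htcδ hq.le
                    have h2 : 0 ≤ B ^ r := Real.rpow_nonneg hB0 _
                    have h3 : (0:ℝ) < 1 - β * r := hq
                    apply mul_le_mul_of_nonneg_right _ h2
                    gcongr
            -- combine the pieces
            have hdisj : Disjoint (Ioc (0:ℝ) c) (Ioo c t) :=
              Set.disjoint_left.2 fun x hx hx' => absurd hx.2 (not_le.2 hx'.1)
            have hU : (∫ s in Ioo (0:ℝ) t, (t - s) ^ (-(β * r)) * φ s ^ r)
                = (∫ s in Ioc (0:ℝ) c, (t - s) ^ (-(β * r)) * φ s ^ r)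
                  + ∫ s in Ioo c t, (t - s) ^ (-(β * r)) * φ s ^ r := by
              rw [hsplit]
              exact setIntegral_union hdisj measurableSet_Ioo hint1 hint2
            set X1 : ℝ := δ ^ (-(β * r)) * (Cs j * a) ^ r * T with hX1def
            set Y1 : ℝ := δ ^ (1 - β * r) / (1 - β * r) * B ^ r with hY1def
            have hX10 : 0 ≤ X1 := by
              have := Real.rpow_nonneg hδpos.le (-(β * r))
              have := Real.rpow_nonneg (mul_nonneg (hCspos j).le ha) r
              positivity
            have hY10 : 0 ≤ Y1 := mul_nonneg hlam0 (Real.rpow_nonneg hB0 _)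
            have hIsum : (∫ s in Ioo (0:ℝ) t, (t - s) ^ (-(β * r)) * φ s ^ r) ≤ X1 + Y1 := by
              rw [hU]; exact add_le_add hI1 hI2
            have hInt0 : 0 ≤ ∫ s in Ioo (0:ℝ) t, (t - s) ^ (-(β * r)) * φ s ^ r :=
              setIntegral_nonneg measurableSet_Ioo fun s hs =>
                mul_nonneg (Real.rpow_nonneg (by linarith [hs.2] : (0:ℝ) ≤ t - s) _)
                  (Real.rpow_nonneg (hφ0 s) _)
            have h6 : (∫ s in Ioo (0:ℝ) t, (t - s) ^ (-(β * r)) * φ s ^ r) ^ (1 / r)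
                ≤ X1 ^ (1 / r) + Y1 ^ (1 / r) :=
              (Real.rpow_le_rpow hInt0 hIsum h1r0.le).trans
                (rpow_subadd hX10 hY10 h1r0.le h1r1)
            have hX1r : X1 ^ (1 / r) = (δ ^ (-(β * r)) * T) ^ (1 / r) * (Cs j * a) := by
              rw [show X1 = δ ^ (-(β * r)) * T * (Cs j * a) ^ r by rw [hX1def]; ring]
              rw [Real.mul_rpow (mul_nonneg (Real.rpow_nonneg hδpos.le _) hT.le)
                (Real.rpow_nonneg (mul_nonneg (hCspos j).le ha) _)]
              rw [← Real.rpow_mul (mul_nonneg (hCspos j).le ha),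
                mul_one_div_cancel hrne, Real.rpow_one]
            have hY1r : Y1 ^ (1 / r) = (δ ^ (1 - β * r) / (1 - β * r)) ^ (1 / r) * B := by
              rw [hY1def, Real.mul_rpow hlam0 (Real.rpow_nonneg hB0 _)]
              rw [← Real.rpow_mul hB0, mul_one_div_cancel hrne, Real.rpow_one]
            have h5 := hineq t ⟨h0t.le, htT⟩
            have h8 : b * ((∫ s in Ioo (0:ℝ) t, (t - s) ^ (-(β * r)) * φ s ^ r) ^ (1 / r))
                ≤ K * (Cs j * a) + (1 / 2) * B := by
              calc b * ((∫ s in Ioo (0:ℝ) t, (t - s) ^ (-(β * r)) * φ s ^ r) ^ (1 / r))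
                  ≤ b * (X1 ^ (1 / r) + Y1 ^ (1 / r)) := mul_le_mul_of_nonneg_left h6 hb
                _ = K * (Cs j * a)
                    + (b * (δ ^ (1 - β * r) / (1 - β * r)) ^ (1 / r)) * B := by
                    rw [hX1r, hY1r, hKdef]; ring
                _ ≤ K * (Cs j * a) + (1 / 2) * B :=
                    add_le_add_right (mul_le_mul_of_nonneg_right hcontr hB0) _
            calc φ t ≤ a + b * ((∫ s in Ioo (0:ℝ) t, (t - s) ^ (-(β * r)) * φ s ^ r) ^ (1 / r)) := h5
              _ ≤ a + (K * (Cs j * a) + (1 / 2) * B) := by linarith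
              _ = 2 * A + (1 / 2) ^ (n + 1) * M := by rw [hAdef, hBdef]; ring
      -- pass to the limit in n
      intro t ht
      have hlim : Tendsto (fun n : ℕ => 2 * A + (1 / 2 : ℝ) ^ n * M) atTop
          (nhds (2 * A + 0 * M)) :=
        tendsto_const_nhds.add
          ((tendsto_pow_atTop_nhds_zero_of_lt_one (by norm_num) (by norm_num)).mul_const M)
      have hfin := ge_of_tendsto' hlim (fun n => key n t ht)
      rw [hCA]
      simpa using hfin
  intro t ht
  have htm : t ∈ Icc (0:ℝ) (min (N * δ) T) := ⟨ht.1, le_min (ht.2.trans hN) ht.2⟩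
  exact main N t htm
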